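/- Fix B₁, D₁ > 0 and σ > 0, and suppose that for all T > 1 and all ε with 0 < ε ≤ n^{-2/3}T^{4/3} ≤ 1/2 one has |c_n|² · ε n^{-2/3}T^{4/3} ≤ B₁ ε T² + D₁ T^{2−σ}. Then |c_n|² ≤ C' n^{1−δ(σ)} with δ(σ) = σ/(4+3σ), for some C' depending only on B₁, D₁, σ. In particular σ = 2/3 yields |c_n|² ≤ C' n^{8/9}. -/

import Mathlib

theorem stmt12 (B₁ D₁ σ : ℝ) (hB : 0 < B₁) (hD : 0 < D₁) (hσ : 0 < σ) :
    ∃ C > 0, ∃ N : ℝ, ∀ n cn2 : ℝ, N ≤ n → 0 ≤ cn2 →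
      (∀ T ε : ℝ, 1 < T → 0 < ε → ε ≤ n ^ (-(2:ℝ)/3) * T ^ ((4:ℝ)/3) →
          n ^ (-(2:ℝ)/3) * T ^ ((4:ℝ)/3) ≤ 1/2 →
          cn2 * (ε * n ^ (-(2:ℝ)/3) * T ^ ((4:ℝ)/3)) ≤ B₁ * ε * T ^ 2 + D₁ * T ^ ((2:ℝ) - σ)) →
      cn2 ≤ C * n ^ ((1:ℝ) - σ / (4 + 3 * σ)) := by
  have hσ4 : (0:ℝ) < 4 + 3*σ := by linarith
  refine ⟨B₁ + D₁, by linarith, (2:ℝ) ^ ((4+3*σ)/(2*σ)), ?_⟩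
  intro n cn2 hNn hc h
  have hN1 : (1:ℝ) < (2:ℝ) ^ ((4+3*σ)/(2*σ)) := by
    have hp : (0:ℝ) < (4+3*σ)/(2*σ) := by positivity
    exact (Real.one_lt_rpow_iff_of_pos (by norm_num)).2 (Or.inl ⟨one_lt_two, hp⟩)
  have hn1 : 1 < n := lt_of_lt_of_le hN1 hNn
  have hn0 : 0 < n := lt_trans one_pos hn1
  set θ : ℝ := 2/(4+3*σ) with hθ
  have hθ0 : 0 < θ := by positivity
  have hT1 : 1 < n ^ θ := (Real.one_lt_rpow_iff_of_pos hn0).2 (Or.inl ⟨hn1, hθ0⟩)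
  set e : ℝ := -(2:ℝ)/3 + θ*(4/3) with he
  have heval : e = -(2*σ)/(4+3*σ) := by rw [he, hθ]; field_simp; ring
  have hεeq : n ^ (-(2:ℝ)/3) * (n ^ θ) ^ ((4:ℝ)/3) = n ^ e := by
    rw [← Real.rpow_mul hn0.le, ← Real.rpow_add hn0]
  have hme : -e = 2*σ/(4+3*σ) := by rw [heval]; ring
  have hme0 : (0:ℝ) ≤ -e := by rw [hme]; positivity
  have h2 : (2:ℝ) ≤ n ^ (-e) := by
    have h1 : ((2:ℝ) ^ ((4+3*σ)/(2*σ))) ^ (-e) ≤ n ^ (-e) :=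
      Real.rpow_le_rpow (by positivity) hNn hme0
    have h0 : ((2:ℝ) ^ ((4+3*σ)/(2*σ))) ^ (-e) = 2 := by
      rw [← Real.rpow_mul (by norm_num)]
      rw [show ((4+3*σ)/(2*σ)) * (-e) = 1 from by rw [hme]; field_simp]
      exact Real.rpow_one 2
    linarith
  have hpos : 0 < n ^ (-e) := Real.rpow_pos_of_pos hn0 _
  have hhalf : n ^ e ≤ 1/2 := by
    have hinv : n ^ e = 1 / n ^ (-e) := by
      rw [eq_div_iff hpos.ne', ← Real.rpow_add hn0]; simp
    rw [hinv]
    exact one_div_le_one_div_of_le two_pos h2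
  have hε0 : 0 < n ^ e := Real.rpow_pos_of_pos hn0 e
  have hkey := h (n ^ θ) (n ^ e) hT1 hε0 (le_of_eq hεeq.symm) (by rw [hεeq]; exact hhalf)
  set μ : ℝ := (1:ℝ) - σ/(4+3*σ) with hμ
  have hP : (0:ℝ) < n ^ (e+e) := Real.rpow_pos_of_pos hn0 _
  have hA1 : n ^ e * (n ^ (-(2:ℝ)/3) * (n ^ θ) ^ ((4:ℝ)/3)) = n ^ (e+e) := by
    rw [hεeq, ← Real.rpow_add hn0]
  have hE1 : e + θ*2 = μ + (e+e) := by
    rw [heval, hθ, hμ]; field_simp; ring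
  have hE2 : θ*((2:ℝ)-σ) = μ + (e+e) := by
    rw [heval, hθ, hμ]; field_simp; ring
  have hA2 : n ^ e * (n ^ θ) ^ 2 = n ^ μ * n ^ (e+e) := by
    rw [show ((n:ℝ) ^ θ) ^ 2 = (n ^ θ) ^ ((2:ℝ)) from (Real.rpow_two _).symm,
      ← Real.rpow_mul hn0.le, ← Real.rpow_add hn0, hE1, Real.rpow_add hn0]
  have hA3 : (n ^ θ) ^ ((2:ℝ) - σ) = n ^ μ * n ^ (e+e) := by
    rw [← Real.rpow_mul hn0.le, hE2, Real.rpow_add hn0]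
  have hkey2 : cn2 * n ^ (e+e) ≤ ((B₁ + D₁) * n ^ μ) * n ^ (e+e) := by
    calc cn2 * n ^ (e+e) = cn2 * (n ^ e * (n ^ (-(2:ℝ)/3) * (n ^ θ) ^ ((4:ℝ)/3))) := by
          rw [hA1]
      _ = cn2 * (n ^ e * n ^ (-(2:ℝ)/3) * (n ^ θ) ^ ((4:ℝ)/3)) := by ring
      _ ≤ B₁ * n ^ e * (n ^ θ) ^ 2 + D₁ * (n ^ θ) ^ ((2:ℝ) - σ) := hkey
      _ = B₁ * (n ^ e * (n ^ θ) ^ 2) + D₁ * (n ^ θ) ^ ((2:ℝ) - σ) := by ring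
      _ = B₁ * (n ^ μ * n ^ (e+e)) + D₁ * (n ^ μ * n ^ (e+e)) := by rw [hA2, hA3]
      _ = ((B₁ + D₁) * n ^ μ) * n ^ (e+e) := by ring
  exact le_of_mul_le_mul_right hkey2 hP
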